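/- arXiv:2002.00586 — 9 statements merged into one kernel-verified Lean document; each statement's English description precedes it below -/
import Mathlib

section
/- For real constants D > 0, W > 0 and k > 0, the function E(P) = D·P / (W·logb 2 (1 + k·P)) is strictly increasing on the interval (0, ∞). (Equivalently, the energy required to transmit a fixed amount of data D at rate W·logb 2 (1+kP) over time D/(W·logb 2 (1+kP)) is a strictly increasing function of the transmit power P.) -/
lemma key_log_ineq (k a b : ℝ) (hk : 0 < k) (ha : 0 < a) (hab : a < b) :
    a * Real.log (1 + k * b) < b * Real.log (1 + k * a) := by
  have hb : 0 < b := ha.trans hab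
  set t : ℝ := a / b with ht
  have htpos : 0 < t := div_pos ha hb
  have htlt : t < 1 := (div_lt_one hb).2 hab
  have hx : (1 : ℝ) ∈ Set.Ioi (0 : ℝ) := by norm_num
  have hy : (1 + k * b) ∈ Set.Ioi (0 : ℝ) := by
    simp only [Set.mem_Ioi]; nlinarith
  have hne : (1 : ℝ) ≠ 1 + k * b := by nlinarith
  have h := strictConcaveOn_log_Ioi.2 hx hy hne (by linarith : (0:ℝ) < 1 - t) htpos
    (by ring)
  simp only [smul_eq_mul, Real.log_one, mul_zero, mul_one, zero_add] at h
  have htb : t * b = a := div_mul_cancel₀ a hb.ne'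
  have harg : 1 - t + t * (1 + k * b) = 1 + k * a := by
    linear_combination k * htb
  rw [harg] at h
  have := (mul_lt_mul_iff_right₀ hb).2 h
  calc a * Real.log (1 + k * b) = b * (t * Real.log (1 + k * b)) := by
        rw [← mul_assoc, mul_comm b t, htb]
    _ < b * Real.log (1 + k * a) := this

/-- For real constants `D > 0`, `W > 0` and `k > 0`, the energy
`E(P) = D·P / (W·logb 2 (1 + k·P))` required to transmit `D` bits at power `P`
is a strictly increasing function of the transmit power `P` on `(0, ∞)`. -/
theorem energy_strictMonoOn (D W k : ℝ) (hD : 0 < D) (hW : 0 < W) (hk : 0 < k) :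
    StrictMonoOn (fun P : ℝ => D * P / (W * Real.logb 2 (1 + k * P))) (Set.Ioi 0) := by
  intro a ha b hb hab
  simp only [Set.mem_Ioi] at ha hb
  have hla : 0 < Real.logb 2 (1 + k * a) :=
    Real.logb_pos (by norm_num) (by nlinarith)
  have hlb : 0 < Real.logb 2 (1 + k * b) :=
    Real.logb_pos (by norm_num) (by nlinarith)
  have hda : 0 < W * Real.logb 2 (1 + k * a) := mul_pos hW hla
  have hdb : 0 < W * Real.logb 2 (1 + k * b) := mul_pos hW hlb
  rw [div_lt_div_iff₀ hda hdb]
  have hlog2 : 0 < Real.log 2 := Real.log_pos (by norm_num)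
  have key := key_log_ineq k a b hk ha hab
  simp only [Real.logb]
  rw [div_eq_mul_inv, div_eq_mul_inv]
  have hinv : 0 < (Real.log 2)⁻¹ := inv_pos.2 hlog2
  nlinarith [mul_pos (mul_pos hD hW) hinv, key]
end

section
/- (Lemma 1: no initial waiting time.) Let B ≥ 0, C ≥ 0, D > 0, W > 0, k > 0 and Pmax > 0. Suppose τ0 > 0, τ1 > 0 and 0 < P1 ≤ Pmax satisfy the data constraint W·τ1·logb 2 (1 + k·P1) ≥ D and the energy causality constraint P1·τ1 ≤ B + C·(τ0 + τ1). Then there exists P1' with 0 < P1' < P1 such that W·(τ0 + τ1)·logb 2 (1 + k·P1') ≥ D and P1'·(τ0 + τ1) < B + C·(τ0 + τ1). In particular, absorbing the initial energy-harvesting waiting time τ0 into the transmission slot remains feasible without increasing the completion time, so the optimal initial waiting time is τ0 = 0. -/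
/-- Lemma 1 (no initial waiting time): if a user can transmit its data `D` in time `τ1`
with power `0 < P1 ≤ Pmax` after waiting `τ0` to harvest energy, then it can instead
transmit over the whole interval `τ0 + τ1` with a strictly smaller power `P1'`,
still meeting its data demand and strictly satisfying the energy causality constraint.
Hence the optimal initial waiting time is `τ0 = 0`. -/
theorem no_initial_waiting (B C D W k Pmax τ0 τ1 P1 : ℝ)
    (hB : 0 ≤ B) (hC : 0 ≤ C) (hD : 0 < D) (hW : 0 < W) (hk : 0 < k) (hPmax : 0 < Pmax)
    (hτ0 : 0 < τ0) (hτ1 : 0 < τ1) (hP1 : 0 < P1) (hP1le : P1 ≤ Pmax)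
    (hdata : W * τ1 * Real.logb 2 (1 + k * P1) ≥ D)
    (henergy : P1 * τ1 ≤ B + C * (τ0 + τ1)) :
    ∃ P1' : ℝ, 0 < P1' ∧ P1' < P1 ∧
      W * (τ0 + τ1) * Real.logb 2 (1 + k * P1') ≥ D ∧
      P1' * (τ0 + τ1) < B + C * (τ0 + τ1) := by
  have hT : 0 < τ0 + τ1 := by linarith
  set θ : ℝ := τ1 / (τ0 + τ1) with hθdef
  have hθpos : 0 < θ := div_pos hτ1 hT
  have hθlt : θ < 1 := by rw [hθdef, div_lt_one hT]; linarith
  have hkP : 0 < k * P1 := mul_pos hk hP1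
  set a : ℝ := 1 + k * P1 with hadef
  have ha1 : 1 < a := by simp only [hadef]; linarith
  have ha0 : 0 < a := by linarith
  have h1 : 1 < a ^ θ :=
    (Real.one_lt_rpow_iff_of_pos ha0).mpr (Or.inl ⟨ha1, hθpos⟩)
  have h2 : a ^ θ < a := by
    have := Real.rpow_lt_rpow_of_exponent_lt ha1 hθlt
    rwa [Real.rpow_one] at this
  have hBern : a ^ θ < 1 + θ * (k * P1) :=
    rpow_one_add_lt_one_add_mul_self (by linarith) (ne_of_gt hkP) hθpos hθlt
  refine ⟨(a ^ θ - 1) / k, div_pos (by linarith) hk, ?_, ?_, ?_⟩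
  · rw [div_lt_iff₀ hk]
    calc a ^ θ - 1 < a - 1 := by linarith
    _ = k * P1 := by simp [hadef]
    _ = P1 * k := mul_comm _ _
  · have hrw : 1 + k * ((a ^ θ - 1) / k) = a ^ θ := by
      field_simp
      ring
    rw [hrw]
    have hlog : Real.logb 2 (a ^ θ) = θ * Real.logb 2 a := by
      rw [Real.logb, Real.logb, Real.log_rpow ha0, mul_div_assoc]
    rw [hlog]
    have hτθ : (τ0 + τ1) * θ = τ1 := by
      rw [hθdef]; field_simp
    calc W * (τ0 + τ1) * (θ * Real.logb 2 a) = W * ((τ0 + τ1) * θ) * Real.logb 2 a := by ring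
    _ = W * τ1 * Real.logb 2 a := by rw [hτθ]
    _ ≥ D := hdata
  · have hlt : (a ^ θ - 1) / k < θ * P1 := by
      rw [div_lt_iff₀ hk]
      calc a ^ θ - 1 < θ * (k * P1) := by linarith
      _ = θ * P1 * k := by ring
    have hτθ : θ * P1 * (τ0 + τ1) = P1 * τ1 := by
      rw [hθdef]; field_simp
    calc (a ^ θ - 1) / k * (τ0 + τ1) < θ * P1 * (τ0 + τ1) :=
          mul_lt_mul_of_pos_right hlt hT
    _ = P1 * τ1 := hτθ
    _ ≤ B + C * (τ0 + τ1) := henergy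
end

section
/- (Lemma 2: data constraints are tight at the optimum.) Consider the power control and time allocation problem PCP with N users: given constants W > 0, Pmax > 0 and, for each i ∈ {1,…,N}, D_i > 0, k_i > 0, B_i ≥ 0, C_i ≥ 0, the feasible set F consists of all pairs of vectors (τ, α) ∈ ℝ^N × ℝ^N with, for every i: τ_i > 0, α_i ≥ 0, W·τ_i·logb 2 (1 + k_i·α_i/τ_i) ≥ D_i (data constraint), α_i ≤ τ_i·Pmax (maximum power constraint), and α_i ≤ B_i + C_i·Σ_{j=1}^{i} τ_j (energy causality constraint). Assume F contains a Slater point, i.e., a feasible point at which all three inequality constraints of every user hold strictly. If (τ*, α*) ∈ F minimizes Σ_{i=1}^{N} τ_i over F, then for every i ∈ {1,…,N} the data constraint is satisfied with equality: W·τ*_i·logb 2 (1 + k_i·α*_i/τ*_i) = D_i. -/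
open Finset

lemma inner_scale {k θ τ α : ℝ} (hθ : θ ≠ 0) (hτ : τ ≠ 0) :
    k * (θ * α) / (θ * τ) = k * α / τ := by
  field_simp

lemma log_mono_strict {τ τ' a : ℝ} (hτ : 0 < τ) (h : τ < τ') (ha : 0 < a) :
    τ * Real.log (1 + a / τ) < τ' * Real.log (1 + a / τ') := by
  have hτ' : 0 < τ' := hτ.trans h
  have hx : (1 : ℝ) + a / τ ∈ Set.Ioi (0:ℝ) := by
    have : 0 < a / τ := div_pos ha hτ
    simp [Set.mem_Ioi]; linarith
  have hy : (1:ℝ) ∈ Set.Ioi (0:ℝ) := by simp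
  have hne : (1 : ℝ) + a / τ ≠ 1 := by
    have : 0 < a / τ := div_pos ha hτ
    linarith
  have h1 : 0 < τ / τ' := div_pos hτ hτ'
  have h2 : 0 < (τ' - τ) / τ' := div_pos (by linarith) hτ'
  have h3 : τ / τ' + (τ' - τ) / τ' = 1 := by field_simp; ring
  have key := strictConcaveOn_log_Ioi.2 hx hy hne h1 h2 h3
  simp only [smul_eq_mul, Real.log_one, mul_zero, add_zero] at key
  have harg : τ / τ' * (1 + a / τ) + (τ' - τ) / τ' * 1 = 1 + a / τ' := by
    field_simp
    ring
  rw [harg] at key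
  calc τ * Real.log (1 + a / τ) = τ' * (τ / τ' * Real.log (1 + a / τ)) := by
        field_simp
    _ < τ' * Real.log (1 + a / τ') := by
        exact mul_lt_mul_of_pos_left key hτ'

lemma logb_mono_strict {τ τ' a : ℝ} (hτ : 0 < τ) (h : τ < τ') (ha : 0 < a) :
    τ * Real.logb 2 (1 + a / τ) < τ' * Real.logb 2 (1 + a / τ') := by
  have h2 : 0 < Real.log 2 := Real.log_pos one_lt_two
  simp only [Real.logb, ← mul_div_assoc]
  exact div_lt_div_of_pos_right (log_mono_strict hτ h ha) h2

lemma energy_scale {θ a b c S t : ℝ} (hθpos : 0 < θ) (hθlt : θ < 1)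
    (hb : 0 ≤ b) (hc : 0 ≤ c) (htS : t ≤ S) (heng : a ≤ b + c * S) :
    θ * a ≤ b + c * (S - (1 - θ) * t) := by
  nlinarith [mul_le_mul_of_nonneg_left heng hθpos.le,
    mul_nonneg (mul_nonneg (by linarith : (0:ℝ) ≤ 1 - θ) hc) (by linarith : (0:ℝ) ≤ S - t),
    mul_nonneg (by linarith : (0:ℝ) ≤ 1 - θ) hb]

lemma power_scale {θ a t P : ℝ} (hθpos : 0 < θ) (hpow : a ≤ t * P) :
    θ * a ≤ θ * t * P := by
  calc θ * a ≤ θ * (t * P) := mul_le_mul_of_nonneg_left hpow hθpos.le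
    _ = θ * t * P := by ring

def Feas (N : ℕ) (W Pmax : ℝ) (D k B C : Fin N → ℝ) (τ α : Fin N → ℝ) : Prop :=
  ∀ i : Fin N, 0 < τ i ∧ 0 ≤ α i ∧
    D i ≤ W * τ i * Real.logb 2 (1 + k i * α i / τ i) ∧
    α i ≤ τ i * Pmax ∧ α i ≤ B i + C i * ∑ j ∈ Finset.Iic i, τ j

lemma scale_props {N : ℕ} {W : ℝ} (hW : 0 < W) {D k : Fin N → ℝ}
    (hD : ∀ i, 0 < D i) {τ α : Fin N → ℝ} {i : Fin N} (hτi : 0 < τ i)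
    (hslack : D i < W * τ i * Real.logb 2 (1 + k i * α i / τ i)) :
    ∃ θ : ℝ, 0 < θ ∧ θ < 1 ∧
      W * (θ * τ i) * Real.logb 2 (1 + k i * (θ * α i) / (θ * τ i)) = D i := by
  have hfpos : 0 < W * τ i * Real.logb 2 (1 + k i * α i / τ i) := (hD i).trans hslack
  have hθpos : 0 < D i / (W * τ i * Real.logb 2 (1 + k i * α i / τ i)) :=
    div_pos (hD i) hfpos
  refine ⟨D i / (W * τ i * Real.logb 2 (1 + k i * α i / τ i)), hθpos,
    (div_lt_one hfpos).2 hslack, ?_⟩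
  rw [inner_scale hθpos.ne' hτi.ne']
  have hL : 0 < Real.logb 2 (1 + k i * α i / τ i) := by nlinarith [mul_pos hW hτi]
  generalize hLg : Real.logb 2 (1 + k i * α i / τ i) = L at hL ⊢
  field_simp

lemma improve {N : ℕ} {W Pmax : ℝ} (hW : 0 < W) (hPmax : 0 < Pmax)
    {D k B C : Fin N → ℝ} (hD : ∀ i, 0 < D i) (hk : ∀ i, 0 < k i)
    (hB : ∀ i, 0 ≤ B i) (hC : ∀ i, 0 ≤ C i) :
    ∀ m : ℕ, ∀ τ α : Fin N → ℝ, ∀ i : Fin N, N - 1 - i.val ≤ m →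
      Feas N W Pmax D k B C τ α →
      D i < W * τ i * Real.logb 2 (1 + k i * α i / τ i) →
      ∃ τ' α' : Fin N → ℝ, Feas N W Pmax D k B C τ' α' ∧ ∑ j, τ' j < ∑ j, τ j := by
  intro m
  induction m with
  | zero =>
    intro τ α i hbi hfeas hslack
    have hlast : i.val = N - 1 := by omega
    obtain ⟨hτi, hαi, hdata, hpow, heng⟩ := hfeas i
    obtain ⟨θ, hθpos, hθlt, hdeq⟩ := scale_props hW hD hτi hslack
    refine ⟨fun j => τ j - (if j = i then (1 - θ) * τ i else 0),
            fun j => α j - (if j = i then (1 - θ) * α i else 0), ?_, ?_⟩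
    · intro j
      by_cases hj : j = i
      · subst hj
        have hsum : ∑ l ∈ Finset.Iic j, (τ l - (if l = j then (1 - θ) * τ j else 0))
            = (∑ l ∈ Finset.Iic j, τ l) - (1 - θ) * τ j := by
          rw [Finset.sum_sub_distrib, Finset.sum_ite_eq' _ j (fun _ => (1 - θ) * τ j),
            if_pos (Finset.mem_Iic.2 le_rfl)]
        simp only [hsum, eq_self_iff_true, if_true]
        have hτ'j : τ j - (1 - θ) * τ j = θ * τ j := by ring
        have hα'j : α j - (1 - θ) * α j = θ * α j := by ring
        rw [hτ'j, hα'j]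
        have hθτ : 0 < θ * τ j := mul_pos hθpos hτi
        have hτS : τ j ≤ ∑ l ∈ Finset.Iic j, τ l :=
          Finset.single_le_sum (fun l _ => ((hfeas l).1).le) (Finset.mem_Iic.2 le_rfl)
        exact ⟨hθτ, mul_nonneg hθpos.le hαi, le_of_eq hdeq.symm,
          power_scale hθpos hpow,
          energy_scale hθpos hθlt (hB j) (hC j) hτS heng⟩
      · have hv1 : (if j = i then (1 - θ) * τ i else 0) = 0 := if_neg hj
        have hv2 : (if j = i then (1 - θ) * α i else 0) = 0 := if_neg hj
        have hji : ¬ i ≤ j := by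
          have := Fin.val_ne_of_ne hj
          have hjN := j.isLt
          rw [Fin.le_def]
          omega
        have hsum : ∑ l ∈ Finset.Iic j, (τ l - (if l = i then (1 - θ) * τ i else 0))
            = ∑ l ∈ Finset.Iic j, τ l := by
          rw [Finset.sum_sub_distrib, Finset.sum_ite_eq' _ i (fun _ => (1 - θ) * τ i),
            if_neg (by simpa [Finset.mem_Iic] using hji)]
          ring
        simp only [hv1, hv2, hsum, sub_zero]
        exact hfeas j
    · have hsum : ∑ j, (τ j - (if j = i then (1 - θ) * τ i else 0))
          = (∑ j, τ j) - (1 - θ) * τ i := by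
        rw [Finset.sum_sub_distrib, Finset.sum_ite_eq' _ i (fun _ => (1 - θ) * τ i),
          if_pos (Finset.mem_univ i)]
      rw [hsum]
      have : 0 < (1 - θ) * τ i := mul_pos (by linarith) hτi
      linarith
  | succ m ih =>
    intro τ α i hbi hfeas hslack
    rcases le_or_gt (N - 1 - i.val) m with hle | hgt
    · exact ih τ α i hle hfeas hslack
    · have hiN : i.val + 1 < N := by have := i.isLt; omega
      set i' : Fin N := ⟨i.val + 1, hiN⟩ with hi'def
      have hii' : i ≠ i' := by
        intro h
        have : i.val = i.val + 1 := congrArg Fin.val h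
        omega
      have hii'2 : i' ≠ i := hii'.symm
      obtain ⟨hτi, hαi, hdata, hpow, heng⟩ := hfeas i
      obtain ⟨hτi', hαi', hdata', hpow', heng'⟩ := hfeas i'
      obtain ⟨θ, hθpos, hθlt, hdeq⟩ := scale_props hW hD hτi hslack
      obtain ⟨c, hcdef⟩ : ∃ c : ℝ, c = (1 - θ) * τ i := ⟨_, rfl⟩
      have hcpos : 0 < c := hcdef ▸ mul_pos (by linarith) hτi
      set τ'' : Fin N → ℝ :=
        fun j => τ j + c * ((if j = i' then (1:ℝ) else 0) - (if j = i then 1 else 0))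
        with hτ''def
      set α'' : Fin N → ℝ := fun j => α j - (if j = i then (1 - θ) * α i else 0) with hα''def
      have hsum : ∀ s : Finset (Fin N), ∑ j ∈ s, τ'' j =
          (∑ j ∈ s, τ j) + c * ((if i' ∈ s then (1:ℝ) else 0) - (if i ∈ s then 1 else 0)) := by
        intro s
        simp only [hτ''def]
        rw [Finset.sum_add_distrib, ← Finset.mul_sum, Finset.sum_sub_distrib,
          Finset.sum_ite_eq' s i' (fun _ => (1:ℝ)), Finset.sum_ite_eq' s i (fun _ => (1:ℝ))]
      have hτ''i : τ'' i = θ * τ i := by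
        simp only [hτ''def]
        rw [if_neg hii']
        simp only [eq_self_iff_true, if_true]
        rw [hcdef]
        ring
      have hα''i : α'' i = θ * α i := by
        simp only [hα''def]
        simp only [eq_self_iff_true, if_true]
        ring
      have hτ''i' : τ'' i' = τ i' + c := by
        simp only [hτ''def]
        rw [if_neg hii'2]
        simp only [eq_self_iff_true, if_true]
        ring
      have hα''i' : α'' i' = α i' := by
        simp only [hα''def]
        rw [if_neg hii'2]
        ring
      have hαi'pos : 0 < α i' := by
        rcases lt_or_eq_of_le hαi' with h | h
        · exact h
        · exfalso
          rw [← h] at hdata'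
          simp only [mul_zero, zero_div, add_zero] at hdata'
          rw [Real.logb_one, mul_zero] at hdata'
          exact absurd hdata' (not_le.2 (hD i'))
      have hslack2 : D i' < W * (τ i' + c) * Real.logb 2 (1 + k i' * α i' / (τ i' + c)) := by
        have hkpos : 0 < k i' := hk i'
        have hmono := logb_mono_strict hτi' (by linarith : τ i' < τ i' + c)
          (mul_pos hkpos hαi'pos)
        calc D i' ≤ W * τ i' * Real.logb 2 (1 + k i' * α i' / τ i') := hdata'
          _ < W * (τ i' + c) * Real.logb 2 (1 + k i' * α i' / (τ i' + c)) := by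
              rw [mul_assoc, mul_assoc]
              exact mul_lt_mul_of_pos_left hmono hW
      have hslack'' : D i' < W * τ'' i' * Real.logb 2 (1 + k i' * α'' i' / τ'' i') := by
        rw [hτ''i', hα''i']
        exact hslack2
      have hfeas'' : Feas N W Pmax D k B C τ'' α'' := by
        intro j
        by_cases hj : j = i
        · subst hj
          have hIic : ∑ l ∈ Finset.Iic j, τ'' l = (∑ l ∈ Finset.Iic j, τ l) - c := by
            rw [hsum (Finset.Iic j),
              if_neg (by simp only [Finset.mem_Iic, Fin.le_def, hi'def]; omega),
              if_pos (Finset.mem_Iic.2 le_rfl)]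
            ring
          rw [hτ''i, hα''i, hIic, hcdef]
          have hθτ : 0 < θ * τ j := mul_pos hθpos hτi
          have hτS : τ j ≤ ∑ l ∈ Finset.Iic j, τ l :=
            Finset.single_le_sum (fun l _ => ((hfeas l).1).le) (Finset.mem_Iic.2 le_rfl)
          exact ⟨hθτ, mul_nonneg hθpos.le hαi, le_of_eq hdeq.symm,
            power_scale hθpos hpow,
            energy_scale hθpos hθlt (hB j) (hC j) hτS heng⟩
        · by_cases hj' : j = i'
          · subst hj'
            have hIic : ∑ l ∈ Finset.Iic i', τ'' l = ∑ l ∈ Finset.Iic i', τ l := by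
              rw [hsum (Finset.Iic i'), if_pos (Finset.mem_Iic.2 le_rfl),
                if_pos (Finset.mem_Iic.2 (by rw [Fin.le_def]; simp [hi'def]))]
              ring
            rw [hτ''i', hα''i', hIic]
            have hpow2 : α i' ≤ (τ i' + c) * Pmax := by
              have h1 : 0 < c * Pmax := mul_pos hcpos hPmax
              nlinarith
            exact ⟨by linarith, hαi', hslack2.le, hpow2, heng'⟩
          · have hτ''j : τ'' j = τ j := by
              simp only [hτ''def]
              rw [if_neg hj', if_neg hj]
              ring
            have hα''j : α'' j = α j := by
              simp only [hα''def]
              rw [if_neg hj]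
              ring
            have hiff : (i' ∈ Finset.Iic j) ↔ (i ∈ Finset.Iic j) := by
              simp only [Finset.mem_Iic, Fin.le_def, hi'def]
              have h1 := Fin.val_ne_of_ne hj
              have h2 := Fin.val_ne_of_ne hj'
              simp only [hi'def] at h2
              constructor <;> intro <;> omega
            have hIic : ∑ l ∈ Finset.Iic j, τ'' l = ∑ l ∈ Finset.Iic j, τ l := by
              rw [hsum (Finset.Iic j), if_congr hiff rfl rfl]
              ring
            rw [hτ''j, hα''j, hIic]
            exact hfeas j
      have hsumuniv : ∑ j, τ'' j = ∑ j, τ j := by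
        rw [hsum Finset.univ, if_pos (Finset.mem_univ _), if_pos (Finset.mem_univ _)]
        ring
      have hbound' : N - 1 - i'.val ≤ m := by
        simp only [hi'def]
        omega
      obtain ⟨τ3, α3, hfeas3, hlt3⟩ := ih τ'' α'' i' hbound' hfeas'' hslack''
      exact ⟨τ3, α3, hfeas3, by rw [hsumuniv] at hlt3; exact hlt3⟩

/-- Lemma 2 (data constraints are tight at the optimum): in the power control and
time allocation problem `PCP`, assuming the feasible set contains a Slater point,
any minimizer of the schedule length satisfies every data constraint with equality. -/
theorem data_constraint_tight_at_optimum (N : ℕ) (W Pmax : ℝ)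
    (hW : 0 < W) (hPmax : 0 < Pmax)
    (D k B C : Fin N → ℝ)
    (hD : ∀ i, 0 < D i) (hk : ∀ i, 0 < k i) (hB : ∀ i, 0 ≤ B i) (hC : ∀ i, 0 ≤ C i)
    (F : Set ((Fin N → ℝ) × (Fin N → ℝ)))
    (hF : F = {p | ∀ i : Fin N,
        0 < p.1 i ∧ 0 ≤ p.2 i ∧
        D i ≤ W * p.1 i * Real.logb 2 (1 + k i * p.2 i / p.1 i) ∧
        p.2 i ≤ p.1 i * Pmax ∧
        p.2 i ≤ B i + C i * ∑ j ∈ Finset.Iic i, p.1 j})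
    (hSlater : ∃ p ∈ F, ∀ i : Fin N,
        D i < W * p.1 i * Real.logb 2 (1 + k i * p.2 i / p.1 i) ∧
        p.2 i < p.1 i * Pmax ∧
        p.2 i < B i + C i * ∑ j ∈ Finset.Iic i, p.1 j)
    (τs αs : Fin N → ℝ) (hmem : (τs, αs) ∈ F)
    (hopt : ∀ p ∈ F, ∑ i, τs i ≤ ∑ i, p.1 i) :
    ∀ i : Fin N, W * τs i * Real.logb 2 (1 + k i * αs i / τs i) = D i := by

  intro i
  subst hF
  simp only [Set.mem_setOf_eq] at hmem
  have hfeas : Feas N W Pmax D k B C τs αs := hmem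
  have hle : D i ≤ W * τs i * Real.logb 2 (1 + k i * αs i / τs i) := (hmem i).2.2.1
  by_contra hne
  have hslack : D i < W * τs i * Real.logb 2 (1 + k i * αs i / τs i) :=
    lt_of_le_of_ne hle (fun h => hne h.symm)
  obtain ⟨τ', α', hfeas', hlt⟩ :=
    improve hW hPmax hD hk hB hC (N - 1 - i.val) τs αs i le_rfl hfeas hslack
  have := hopt (τ', α') hfeas'
  simp only at this
  linarith
end

section
/- For constants W > 0, k > 0, ε > 0, C > 0 and D > 0, there exists a unique τ > 0 satisfying W·τ·logb 2 (1 + k·(ε + C·τ)/τ) = D, i.e., the system formed by the tight data constraint and the tight energy causality constraint (used in Theorem 1 to define the optimal transmission time) has exactly one positive solution. -/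
open Real Set Filter

private lemma log_le_two_sqrt {x : ℝ} (hx : 0 < x) : Real.log x ≤ 2 * Real.sqrt x := by
  have h1 : Real.log (Real.sqrt x) = Real.log x / 2 := Real.log_sqrt hx.le
  have h2 : Real.log (Real.sqrt x) ≤ Real.sqrt x - 1 :=
    Real.log_le_sub_one_of_pos (Real.sqrt_pos.2 hx)
  nlinarith [Real.sqrt_nonneg x]

private lemma sqrt_add_le' {x y : ℝ} (hx : 0 ≤ x) (hy : 0 ≤ y) :
    Real.sqrt (x + y) ≤ Real.sqrt x + Real.sqrt y := by
  nlinarith [Real.sq_sqrt (add_nonneg hx hy), Real.sq_sqrt hx, Real.sq_sqrt hy,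
    Real.sqrt_nonneg x, Real.sqrt_nonneg y, Real.sqrt_nonneg (x + y),
    sq_nonneg (Real.sqrt x + Real.sqrt y - Real.sqrt (x + y)),
    sq_nonneg (Real.sqrt x + Real.sqrt y + Real.sqrt (x + y))]

private lemma key_mono {a b : ℝ} (ha : 0 < a) (hb : 0 < b) :
    StrictMonoOn (fun τ : ℝ => τ * Real.log (1 + a + b / τ)) (Ioi 0) := by
  intro s hs t ht hst
  simp only [mem_Ioi] at hs ht
  have h1a : (0:ℝ) < 1 + a := by linarith
  set c := b / (1 + a) with hc_def
  have hc : 0 < c := div_pos hb h1a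
  have hlog : ∀ τ : ℝ, 0 < τ →
      Real.log (1 + a + b / τ) = Real.log (1 + a) + Real.log (1 + c / τ) := by
    intro τ hτ
    rw [← Real.log_mul (by positivity) (by positivity)]
    congr 1
    field_simp [hc_def]
    have hc1 : c * (1 + a) = b := by rw [hc_def]; exact div_mul_cancel₀ b h1a.ne'
    linear_combination -hc1
  simp only [hlog s hs, hlog t ht]
  have hA : s * Real.log (1 + a) < t * Real.log (1 + a) :=
    mul_lt_mul_of_pos_right hst (Real.log_pos (by linarith))
  have hB : s * Real.log (1 + c / s) ≤ t * Real.log (1 + c / t) := by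
    have hx : (1 + c / s) ∈ Ioi (0:ℝ) := by
      simp only [mem_Ioi]; positivity
    have hy : (1:ℝ) ∈ Ioi (0:ℝ) := by norm_num
    have hμ : (0:ℝ) ≤ s / t := by positivity
    have hν : (0:ℝ) ≤ 1 - s / t := by
      have : s / t < 1 := (div_lt_one (by linarith)).2 hst
      linarith
    have hsum : s / t + (1 - s / t) = 1 := by ring
    have key := strictConcaveOn_log_Ioi.concaveOn.2 hx hy hμ hν hsum
    have heval : (s / t) • (1 + c / s) + (1 - s / t) • (1:ℝ) = 1 + c / t := by
      simp only [smul_eq_mul]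
      field_simp
      ring
    rw [heval, Real.log_one, smul_eq_mul, smul_eq_mul, mul_zero, add_zero] at key
    calc s * Real.log (1 + c / s) = t * (s / t * Real.log (1 + c / s)) := by
          field_simp
      _ ≤ t * Real.log (1 + c / t) :=
          mul_le_mul_of_nonneg_left key (by linarith)
  nlinarith [hA, hB]

/-- For constants `W > 0`, `k > 0`, `ε > 0`, `C > 0` and `D > 0`, there is a unique
`τ > 0` with `W·τ·logb 2 (1 + k·(ε + C·τ)/τ) = D`: the system of the tight data
constraint and the tight energy causality constraint has exactly one positive
solution. -/
theorem unique_positive_transmission_time (W k ε C D : ℝ)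
    (hW : 0 < W) (hk : 0 < k) (hε : 0 < ε) (hC : 0 < C) (hD : 0 < D) :
    ∃! τ : ℝ, 0 < τ ∧ W * τ * Real.logb 2 (1 + k * (ε + C * τ) / τ) = D := by
  set a := k * C with ha_def
  set b := k * ε with hb_def
  have ha : 0 < a := mul_pos hk hC
  have hb : 0 < b := mul_pos hk hε
  have hlog2 : 0 < Real.log 2 := Real.log_pos one_lt_two
  set F : ℝ → ℝ := fun τ => W * τ * Real.logb 2 (1 + k * (ε + C * τ) / τ) with hF_def
  have harg : ∀ τ : ℝ, 0 < τ → 1 + k * (ε + C * τ) / τ = 1 + a + b / τ := by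
    intro τ hτ
    field_simp [ha_def, hb_def]
    ring
  have hargpos : ∀ τ : ℝ, 0 < τ → 0 < 1 + k * (ε + C * τ) / τ := by
    intro τ hτ
    have : 0 < k * (ε + C * τ) / τ := by positivity
    linarith
  have hFeq : ∀ τ : ℝ, 0 < τ →
      F τ = (W / Real.log 2) * (τ * Real.log (1 + a + b / τ)) := by
    intro τ hτ
    simp only [hF_def, harg τ hτ, Real.logb]
    ring
  -- strict monotonicity of F on Ioi 0
  have hFmono : StrictMonoOn F (Ioi 0) := by
    intro s hs t ht hst
    rw [hFeq s hs, hFeq t ht]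
    exact mul_lt_mul_of_pos_left (key_mono ha hb hs ht hst) (div_pos hW hlog2)
  -- continuity of F on Ioi 0
  have hFcont : ContinuousOn F (Ioi 0) := by
    intro τ hτ
    simp only [mem_Ioi] at hτ
    apply ContinuousAt.continuousWithinAt
    have hinner : ContinuousAt (fun x : ℝ => 1 + k * (ε + C * x) / x) τ := by
      apply ContinuousAt.add continuousAt_const
      exact ContinuousAt.div (by fun_prop) continuousAt_id (ne_of_gt hτ)
    have hlogc : ContinuousAt (fun x : ℝ => Real.logb 2 (1 + k * (ε + C * x) / x)) τ := by
      have hl : ContinuousAt (fun x : ℝ => Real.log (1 + k * (ε + C * x) / x)) τ :=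
        hinner.log (ne_of_gt (hargpos τ hτ))
      simp only [Real.logb]
      exact hl.div_const _
    exact (continuousAt_const.mul continuousAt_id).mul hlogc
  -- upper bound near 0
  have hupper : ∀ τ : ℝ, 0 < τ → F τ ≤
      (W / Real.log 2) * (2 * Real.sqrt (1 + a) * τ + 2 * Real.sqrt b * Real.sqrt τ) := by
    intro τ hτ
    rw [hFeq τ hτ]
    apply mul_le_mul_of_nonneg_left _ (le_of_lt (div_pos hW hlog2))
    have h1 : Real.log (1 + a + b / τ) ≤ 2 * Real.sqrt (1 + a + b / τ) :=
      log_le_two_sqrt (by positivity)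
    have h2 : Real.sqrt (1 + a + b / τ) ≤ Real.sqrt (1 + a) + Real.sqrt (b / τ) :=
      sqrt_add_le' (by positivity) (by positivity)
    have h3 : τ * Real.sqrt (b / τ) = Real.sqrt b * Real.sqrt τ := by
      rw [show τ * Real.sqrt (b / τ) = Real.sqrt (τ ^ 2) * Real.sqrt (b / τ) by
        rw [Real.sqrt_sq hτ.le], ← Real.sqrt_mul (by positivity), ← Real.sqrt_mul hb.le]
      congr 1
      field_simp
    calc τ * Real.log (1 + a + b / τ)
        ≤ τ * (2 * (Real.sqrt (1 + a) + Real.sqrt (b / τ))) := by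
          apply mul_le_mul_of_nonneg_left _ hτ.le
          linarith
      _ = 2 * Real.sqrt (1 + a) * τ + 2 * (τ * Real.sqrt (b / τ)) := by ring
      _ = 2 * Real.sqrt (1 + a) * τ + 2 * Real.sqrt b * Real.sqrt τ := by rw [h3]; ring
  -- existence of small point with F < D
  have hsmall : ∃ s : ℝ, 0 < s ∧ F s < D := by
    have hGcont : Continuous (fun τ : ℝ =>
        (W / Real.log 2) * (2 * Real.sqrt (1 + a) * τ + 2 * Real.sqrt b * Real.sqrt τ)) := by
      fun_prop
    have hG0 : (fun τ : ℝ =>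
        (W / Real.log 2) * (2 * Real.sqrt (1 + a) * τ + 2 * Real.sqrt b * Real.sqrt τ)) 0 = 0 := by
      simp
    have hT : Tendsto (fun τ : ℝ =>
        (W / Real.log 2) * (2 * Real.sqrt (1 + a) * τ + 2 * Real.sqrt b * Real.sqrt τ))
        (nhdsWithin 0 (Ioi 0)) (nhds 0) := by
      exact tendsto_nhdsWithin_of_tendsto_nhds (hGcont.tendsto' 0 0 (by simp))
    have hev : ∀ᶠ τ in nhdsWithin (0:ℝ) (Ioi 0),
        (W / Real.log 2) * (2 * Real.sqrt (1 + a) * τ + 2 * Real.sqrt b * Real.sqrt τ) < D :=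
      hT.eventually_lt_const hD
    have hmem : ∀ᶠ τ in nhdsWithin (0:ℝ) (Ioi 0), τ ∈ Ioi (0:ℝ) := self_mem_nhdsWithin
    rcases (hev.and hmem).exists with ⟨s, hs1, hs2⟩
    exact ⟨s, hs2, lt_of_le_of_lt (hupper s hs2) hs1⟩
  rcases hsmall with ⟨s, hs, hFs⟩
  -- large point with F > D
  have hlb : 0 < Real.logb 2 (1 + a) := Real.logb_pos one_lt_two (by linarith)
  set t : ℝ := max (s + 1) (D / (W * Real.logb 2 (1 + a)) + 1) with ht_def
  have hst : s < t := lt_of_lt_of_le (lt_add_one s) (le_max_left _ _)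
  have ht : 0 < t := lt_trans hs hst
  have hFt : D < F t := by
    have h1 : 1 + a ≤ 1 + k * (ε + C * t) / t := by
      rw [harg t ht]
      have : 0 < b / t := by positivity
      linarith
    have h2 : Real.logb 2 (1 + a) ≤ Real.logb 2 (1 + k * (ε + C * t) / t) :=
      Real.logb_le_logb_of_le one_lt_two (by linarith) h1
    have h3 : D / (W * Real.logb 2 (1 + a)) < t :=
      lt_of_lt_of_le (lt_add_one _) (le_max_right _ _)
    have h4 : D < W * t * Real.logb 2 (1 + a) := by
      rw [div_lt_iff₀ (by positivity)] at h3
      nlinarith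
    calc D < W * t * Real.logb 2 (1 + a) := h4
      _ ≤ W * t * Real.logb 2 (1 + k * (ε + C * t) / t) := by
          apply mul_le_mul_of_nonneg_left h2 (by positivity)
      _ = F t := rfl
  -- IVT
  have hsub : Icc s t ⊆ Ioi (0:ℝ) := fun x hx => lt_of_lt_of_le hs hx.1
  have hivt := intermediate_value_Icc hst.le (hFcont.mono hsub)
  have hDmem : D ∈ Icc (F s) (F t) := ⟨hFs.le, hFt.le⟩
  rcases hivt hDmem with ⟨τ, hτmem, hFτ⟩
  have hτpos : 0 < τ := lt_of_lt_of_le hs hτmem.1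
  refine ⟨τ, ⟨hτpos, hFτ⟩, ?_⟩
  rintro τ' ⟨hτ'pos, hFτ'⟩
  refine hFmono.injOn (mem_Ioi.2 hτ'pos) (mem_Ioi.2 hτpos) ?_
  rw [hFτ]
  exact hFτ'
end

section
/- For constants k > 0 and C ≥ 0, the function h(P) = (P − C) / logb 2 (1 + k·P) is strictly increasing on (0, ∞). (Consequently, the net energy (P − C)·τ(P) drawn from a user's accumulated energy when transmitting D bits at power P over time τ(P) = D/(W·logb 2 (1+kP)) while harvesting at rate C is strictly increasing in P.) -/
/-- For constants `k > 0` and `C ≥ 0`, the function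
`h(P) = (P − C) / logb 2 (1 + k·P)` is strictly increasing on `(0, ∞)`: the net
energy drawn from a user's accumulated energy when transmitting a fixed amount of
data at power `P` while harvesting at rate `C` is strictly increasing in `P`. -/
theorem net_drain_strictMonoOn (k C : ℝ) (hk : 0 < k) (hC : 0 ≤ C) :
    StrictMonoOn (fun P : ℝ => (P - C) / Real.logb 2 (1 + k * P)) (Set.Ioi 0) := by
  have hlog2 : 0 < Real.log 2 := Real.log_pos one_lt_two
  have hd : ∀ P ∈ Set.Ioi (0:ℝ),
      HasDerivAt (fun P : ℝ => (P - C) / Real.logb 2 (1 + k * P))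
        ((1 * Real.logb 2 (1 + k * P) - (P - C) * (k / (1 + k * P) / Real.log 2))
          / (Real.logb 2 (1 + k * P))^2) P := by
    intro P hP
    have hP0 : 0 < P := hP
    have h1 : (0:ℝ) < 1 + k * P := by nlinarith
    have hL : 0 < Real.logb 2 (1 + k * P) :=
      Real.logb_pos one_lt_two (by nlinarith)
    have hinner : HasDerivAt (fun P : ℝ => 1 + k * P) k P := by
      simpa using ((hasDerivAt_id P).const_mul k).const_add 1
    have hlog : HasDerivAt (fun P : ℝ => Real.log (1 + k * P)) (k / (1 + k * P)) P := by
      have := (Real.hasDerivAt_log (ne_of_gt h1)).comp P hinner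
      rw [div_eq_inv_mul]; exact this
    have hlogb : HasDerivAt (fun P : ℝ => Real.logb 2 (1 + k * P))
        (k / (1 + k * P) / Real.log 2) P := by
      simpa [Real.logb, div_div] using hlog.div_const (Real.log 2)
    exact ((hasDerivAt_id P).sub_const C).div hlogb (ne_of_gt hL)
  apply strictMonoOn_of_deriv_pos (convex_Ioi 0)
  · exact fun P hP => ((hd P hP).differentiableAt.continuousAt).continuousWithinAt
  · intro P hP
    rw [interior_Ioi] at hP
    rw [(hd P hP).deriv]
    have hP0 : 0 < P := hP
    have h1 : (0:ℝ) < 1 + k * P := by nlinarith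
    have h1' : (1:ℝ) < 1 + k * P := by nlinarith
    have hL : 0 < Real.logb 2 (1 + k * P) :=
      Real.logb_pos one_lt_two h1'
    -- key: log (1+kP) > 1 - 1/(1+kP)
    have hkey : 1 - (1 + k * P)⁻¹ < Real.log (1 + k * P) := by
      have h2 := Real.log_lt_sub_one_of_pos (x := (1 + k * P)⁻¹)
        (by positivity) (by
          rw [ne_eq, inv_eq_one]; exact ne_of_gt h1')
      rw [Real.log_inv] at h2
      linarith
    have hnum : (P - C) * (k / (1 + k * P) / Real.log 2) < Real.logb 2 (1 + k * P) := by
      rw [Real.logb, show (P - C) * (k / (1 + k * P) / Real.log 2)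
          = ((P - C) * (k / (1 + k * P))) / Real.log 2 by ring]
      apply div_lt_div_of_pos_right _ hlog2
      rw [div_eq_mul_inv]
      have hinv : (1 + k * P)⁻¹ * (1 + k * P) = 1 := inv_mul_cancel₀ (ne_of_gt h1)
      have hinvpos : 0 < (1 + k * P)⁻¹ := by positivity
      nlinarith [hkey, hinv, mul_nonneg hC (mul_pos hk hinvpos).le]
    have hden : 0 < (Real.logb 2 (1 + k * P))^2 := by positivity
    apply div_pos _ hden
    nlinarith [hnum]
end

section
/- (P* is the maximum transmit power satisfying energy causality.) Let W > 0, k > 0, D > 0, ε > 0, C ≥ 0, and define τ(P) = D/(W·logb 2 (1 + k·P)) for P > 0. Suppose P* > 0 satisfies P*·τ(P*) = ε + C·τ(P*). Then for every P > 0: the energy causality condition P·τ(P) ≤ ε + C·τ(P) holds if and only if P ≤ P*. -/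
/-- For `0 < a < b`, `a·log(1+b) < b·log(1+a)` (strict concavity of `log`). -/
lemma key_strict {a b : ℝ} (ha : 0 < a) (hab : a < b) :
    a * Real.log (1 + b) < b * Real.log (1 + a) := by
  have hb : 0 < b := ha.trans hab
  have ht : 0 < a / b := div_pos ha hb
  have ht1 : a / b < 1 := (div_lt_one hb).mpr hab
  have h1 : (a/b) • Real.log (1+b) + (1 - a/b) • Real.log 1
      < Real.log ((a/b) • (1+b) + (1 - a/b) • (1:ℝ)) := by
    apply strictConcaveOn_log_Ioi.2
    · show (1:ℝ)+b ∈ Set.Ioi 0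
      simp only [Set.mem_Ioi]; linarith
    · show (1:ℝ) ∈ Set.Ioi 0
      simp only [Set.mem_Ioi]; norm_num
    · intro h; linarith
    · exact ht
    · linarith
    · ring
  have harg : (a/b) • (1+b) + (1 - a/b) • (1:ℝ) = 1 + a := by
    field_simp
    simp only [smul_eq_mul, mul_one]; rw [div_mul_eq_mul_div, ← add_div, div_eq_iff hb.ne']; ring
  rw [harg] at h1
  simp only [smul_eq_mul, Real.log_one, mul_zero, add_zero] at h1
  rw [div_mul_eq_mul_div, div_lt_iff₀ hb] at h1
  linarith

/-- Strict monotonicity step: for `0 < P < Q` and `0 ≤ C`,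
`(P−C)·log(1+kQ) < (Q−C)·log(1+kP)`. -/
lemma mono_strict {k C P Q : ℝ} (hk : 0 < k) (hC : 0 ≤ C) (hP : 0 < P) (hPQ : P < Q) :
    (P - C) * Real.log (1 + k * Q) < (Q - C) * Real.log (1 + k * P) := by
  have hQ : 0 < Q := hP.trans hPQ
  have hkey := key_strict (a := k * P) (b := k * Q) (by positivity)
    (by nlinarith)
  have hlogP : 0 < Real.log (1 + k * P) := Real.log_pos (by nlinarith)
  have hlogle : Real.log (1 + k * P) ≤ Real.log (1 + k * Q) :=
    Real.log_le_log (by nlinarith) (by nlinarith)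
  nlinarith [mul_le_mul_of_nonneg_left hlogle hC]

/-- `P*` is the maximum transmit power satisfying energy causality: if
`P*·τ(P*) = ε + C·τ(P*)` where `τ(P) = D/(W·logb 2 (1 + k·P))`, then for every
`P > 0` the energy causality condition `P·τ(P) ≤ ε + C·τ(P)` holds iff `P ≤ P*`. -/
theorem energy_causality_iff_le_Pstar (W k D ε C Pstar : ℝ)
    (hW : 0 < W) (hk : 0 < k) (hD : 0 < D) (hε : 0 < ε) (hC : 0 ≤ C)
    (hPstar : 0 < Pstar)
    (heq : Pstar * (D / (W * Real.logb 2 (1 + k * Pstar)))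
        = ε + C * (D / (W * Real.logb 2 (1 + k * Pstar)))) :
    ∀ P : ℝ, 0 < P →
      (P * (D / (W * Real.logb 2 (1 + k * P)))
          ≤ ε + C * (D / (W * Real.logb 2 (1 + k * P))) ↔ P ≤ Pstar) := by
  have hlog2 : 0 < Real.log 2 := Real.log_pos (by norm_num)
  have hL : ∀ P : ℝ, 0 < P → 0 < Real.log (1 + k * P) := fun P hP =>
    Real.log_pos (by nlinarith)
  have hLb : ∀ P : ℝ, 0 < P → 0 < W * Real.logb 2 (1 + k * P) := by
    intro P hP
    have : 0 < Real.logb 2 (1 + k * P) := by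
      rw [Real.logb]; exact div_pos (hL P hP) hlog2
    positivity
  have hlogb : ∀ y : ℝ, Real.logb 2 y = Real.log y / Real.log 2 := fun _ => rfl
  set Ls := Real.log (1 + k * Pstar) with hLsdef
  have hLs : 0 < Ls := hL Pstar hPstar
  -- equality at Pstar in polynomial form
  have hxs := hLb Pstar hPstar
  have heq2 : (Pstar - C) * D * Real.log 2 = ε * W * Ls := by
    have h1 := congrArg (· * (W * Real.logb 2 (1 + k * Pstar))) heq
    rw [hlogb] at h1
    have hne : Real.log (1 + Pstar * k) ≠ 0 := by rw [mul_comm]; exact (hL Pstar hPstar).ne'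
    field_simp [hne] at h1
    rw [hLsdef, mul_comm k Pstar]
    nlinarith [h1]
  have hPsC : C < Pstar := by
    nlinarith [heq2, mul_pos (mul_pos hε hW) hLs, mul_pos hD hlog2]
  intro P hP
  set Lp := Real.log (1 + k * P) with hLpdef
  have hLp : 0 < Lp := hL P hP
  have hx := hLb P hP
  -- reduce the condition to a polynomial inequality
  have hiff : P * (D / (W * Real.logb 2 (1 + k * P)))
      ≤ ε + C * (D / (W * Real.logb 2 (1 + k * P)))
      ↔ (P - C) * D * Real.log 2 ≤ ε * W * Lp := by
    rw [hlogb]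
    rw [show W * (Lp / Real.log 2) = W * Lp / Real.log 2 by ring]
    rw [div_div_eq_mul_div]
    have hWLp : 0 < W * Lp := by positivity
    have hz : D * Real.log 2 / (W * Lp) * (W * Lp) = D * Real.log 2 :=
      div_mul_cancel₀ _ hWLp.ne'
    constructor
    · intro h
      nlinarith [mul_le_mul_of_nonneg_right h hWLp.le, hz]
    · intro h
      nlinarith [hz, hWLp, h]
  rw [hiff]
  constructor
  · -- condition → P ≤ Pstar, by contraposition
    intro h
    by_contra hgt
    push_neg at hgt
    have hm := mono_strict hk hC hPstar hgt
    nlinarith [mul_le_mul_of_nonneg_right h hLs.le,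
      mul_lt_mul_of_pos_right hm (mul_pos hD hlog2), heq2]
  · intro hle
    rcases eq_or_lt_of_le hle with heqP | hltP
    · subst heqP; linarith [heq2.le]
    · have hm := mono_strict hk hC hP hltP
      nlinarith [mul_lt_mul_of_pos_right hm (mul_pos hD hlog2), heq2, hLs, hLp,
        mul_pos (mul_pos hε hW) hLp]
end

section
/- (Lemma 4: the penalty function is non-increasing in the start time.) Let W > 0, k > 0, D > 0, B ≥ 0, C ≥ 0 and Pmax > 0. Suppose 0 ≤ s₁ ≤ s₂ and P₁ > 0, P₂ > 0 satisfy (P₁ − C)·D/(W·logb 2 (1 + k·P₁)) = B + C·s₁ and (P₂ − C)·D/(W·logb 2 (1 + k·P₂)) = B + C·s₂ (i.e., P_j is the transmit power that exactly exhausts the energy available to a user starting its transmission at time s_j). Then P₁ ≤ P₂, and consequently the corresponding transmission times satisfy D/(W·logb 2 (1 + k·min(Pmax, P₂))) ≤ D/(W·logb 2 (1 + k·min(Pmax, P₁))); equivalently, the penalty ρ(s) = τ(s) − t_min, where τ(s) is the transmission time when starting at time s with the optimal power min(Pmax, P*(s)) and t_min = D/(W·logb 2 (1 + k·Pmax)),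 is non-increasing in s. -/
/-- Concavity through the origin: `x ↦ log (1 + k x) / x` is strictly decreasing. -/
lemma log_ratio_aux {k a b : ℝ} (hk : 0 < k) (ha : 0 < a) (hab : a < b) :
    a * Real.log (1 + k * b) < b * Real.log (1 + k * a) := by
  have hb : 0 < b := ha.trans hab
  have ht : 0 < a / b := div_pos ha hb
  have ht1 : a / b < 1 := (div_lt_one hb).2 hab
  have hx : (1 : ℝ) ∈ Set.Ioi (0 : ℝ) := by norm_num
  have hy : (1 + k * b) ∈ Set.Ioi (0 : ℝ) := by
    simp only [Set.mem_Ioi]; nlinarith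
  have hne : (1 : ℝ) ≠ 1 + k * b := by nlinarith
  have hsum : (1 - a / b) + a / b = 1 := by ring
  have hcomb := strictConcaveOn_log_Ioi.2 hx hy hne (by linarith : 0 < 1 - a / b) ht hsum
  have hcomb' : (1 - a / b) • (1 : ℝ) + (a / b) • (1 + k * b) = 1 + k * a := by
    have hb0 : b ≠ 0 := hb.ne'
    simp only [smul_eq_mul]
    field_simp
    ring
  rw [hcomb'] at hcomb
  simp only [smul_eq_mul, Real.log_one, mul_zero, zero_add] at hcomb
  rw [div_mul_eq_mul_div, div_lt_iff₀ hb] at hcomb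
  nlinarith [hcomb]

/-- Monotonicity of `(P - C) / logb 2 (1 + k P)` (cross-multiplied form). -/
lemma cross_mono {k C a b : ℝ} (hk : 0 < k) (hC : 0 ≤ C) (ha : 0 < a)
    (hCa : C ≤ a) (hab : a < b) :
    (a - C) * Real.log (1 + k * b) < (b - C) * Real.log (1 + k * a) := by
  have hb : 0 < b := ha.trans hab
  have h1 := log_ratio_aux hk ha hab
  have hmono : Real.log (1 + k * a) ≤ Real.log (1 + k * b) :=
    Real.log_le_log (by nlinarith) (by nlinarith)
  nlinarith

/-- Lemma 4 (the penalty function is non-increasing in the start time): if `P₁` and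
`P₂` are the transmit powers that exactly exhaust the energy available to a user
starting its transmission at times `s₁ ≤ s₂` respectively, then `P₁ ≤ P₂`, and the
corresponding transmission times at the optimal powers `min(Pmax, Pⱼ)` satisfy
`τ(s₂) ≤ τ(s₁)`; equivalently the penalty `ρ(s) = τ(s) − t_min` is non-increasing. -/
theorem penalty_nonincreasing (W k D B C Pmax s₁ s₂ P₁ P₂ : ℝ)
    (hW : 0 < W) (hk : 0 < k) (hD : 0 < D) (hB : 0 ≤ B) (hC : 0 ≤ C)
    (hPmax : 0 < Pmax) (hs₁ : 0 ≤ s₁) (hs : s₁ ≤ s₂)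
    (hP₁ : 0 < P₁) (hP₂ : 0 < P₂)
    (h₁ : (P₁ - C) * (D / (W * Real.logb 2 (1 + k * P₁))) = B + C * s₁)
    (h₂ : (P₂ - C) * (D / (W * Real.logb 2 (1 + k * P₂))) = B + C * s₂) :
    P₁ ≤ P₂ ∧
      D / (W * Real.logb 2 (1 + k * min Pmax P₂))
        ≤ D / (W * Real.logb 2 (1 + k * min Pmax P₁)) := by
  have hlog2 : (0:ℝ) < Real.log 2 := Real.log_pos (by norm_num)
  have hL₁ : 0 < Real.logb 2 (1 + k * P₁) :=
    Real.logb_pos (by norm_num) (by nlinarith)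
  have hL₂ : 0 < Real.logb 2 (1 + k * P₂) :=
    Real.logb_pos (by norm_num) (by nlinarith)
  have ht₁ : 0 < D / (W * Real.logb 2 (1 + k * P₁)) :=
    div_pos hD (mul_pos hW hL₁)
  have ht₂ : 0 < D / (W * Real.logb 2 (1 + k * P₂)) :=
    div_pos hD (mul_pos hW hL₂)
  -- both powers are at least C
  have hCP₁ : C ≤ P₁ := by
    by_contra h
    push_neg at h
    nlinarith [mul_neg_of_neg_of_pos (by linarith : P₁ - C < 0) ht₁]
  have hCP₂ : C ≤ P₂ := by
    by_contra h
    push_neg at h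
    nlinarith [mul_neg_of_neg_of_pos (by linarith : P₂ - C < 0) ht₂]
  have hP12 : P₁ ≤ P₂ := by
    by_contra h
    push_neg at h
    -- strict monotonicity gives a contradiction
    have hkey := cross_mono hk hC hP₂ hCP₂ h
    -- turn logb into log
    simp only [Real.logb] at hL₁ hL₂ ht₁ ht₂ h₁ h₂
    have hle : (P₁ - C) * (D / (W * (Real.log (1 + k * P₁) / Real.log 2)))
        ≤ (P₂ - C) * (D / (W * (Real.log (1 + k * P₂) / Real.log 2))) := by
      rw [h₁, h₂]
      nlinarith [mul_le_mul_of_nonneg_left hs hC]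
    have hlog₁ : 0 < Real.log (1 + k * P₁) :=
      Real.log_pos (by have := mul_pos hk hP₁; linarith)
    have hlog₂ : 0 < Real.log (1 + k * P₂) :=
      Real.log_pos (by have := mul_pos hk hP₂; linarith)
    have e : ∀ l : ℝ, l ≠ 0 → D / (W * (l / Real.log 2)) = D * Real.log 2 / (W * l) := by
      intro l hl
      field_simp
    rw [e _ hlog₁.ne', e _ hlog₂.ne', mul_div_assoc', mul_div_assoc',
      div_le_div_iff₀ (mul_pos hW hlog₁) (mul_pos hW hlog₂)] at hle
    have hpos : (0:ℝ) < D * Real.log 2 * W := by positivity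
    have hscaled := mul_lt_mul_of_pos_left hkey hpos
    have e₁ : (P₁ - C) * (D * Real.log 2) * (W * Real.log (1 + k * P₂))
        = D * Real.log 2 * W * ((P₁ - C) * Real.log (1 + k * P₂)) := by ring
    have e₂ : (P₂ - C) * (D * Real.log 2) * (W * Real.log (1 + k * P₁))
        = D * Real.log 2 * W * ((P₂ - C) * Real.log (1 + k * P₁)) := by ring
    rw [e₁, e₂] at hle
    linarith
  refine ⟨hP12, ?_⟩
  have hm₁ : 0 < min Pmax P₁ := lt_min hPmax hP₁
  have hm₂ : 0 < min Pmax P₂ := lt_min hPmax hP₂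
  have hmm : min Pmax P₁ ≤ min Pmax P₂ := min_le_min le_rfl hP12
  have hLm₁ : 0 < Real.logb 2 (1 + k * min Pmax P₁) :=
    Real.logb_pos (by norm_num) (by nlinarith)
  have hLm₂ : 0 < Real.logb 2 (1 + k * min Pmax P₂) :=
    Real.logb_pos (by norm_num) (by nlinarith)
  have hmono : Real.logb 2 (1 + k * min Pmax P₁) ≤ Real.logb 2 (1 + k * min Pmax P₂) :=
    Real.logb_le_logb_of_le (by norm_num) (by nlinarith) (by nlinarith)
  exact div_le_div_of_nonneg_left hD.le (mul_pos hW hLm₁)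
    (mul_le_mul_of_nonneg_left hmono hW.le)
end

section
/- (Theorem 2 and Corollary 2, abstract form: a zero-penalty user may be scheduled first.) Let ι be a finite index set and for each i ∈ ι let e_i : ℝ → ℝ be monotone non-decreasing with e_i(s) ≥ s for all s and with non-increasing slack s ↦ e_i(s) − s. For a list L of elements of ι and a start time t, define the completion time F(L, t) by F([], t) = t and F(i :: L', t) = F(L', e_i(t)). Suppose m ∈ ι is a user with constant slack, i.e., there is c ≥ 0 with e_m(s) = s + c for all s (its penalty is identically zero: its transmission time always equals its minimum possible value). Then for every list L that is a permutation of ι (so m occurs in L exactly once) and every start time t: F(m :: (L.erase m), t) ≤ F(L, t). In particular (t = 0), there exists an optimal minimum-length schedule in which user m is scheduled first. -/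
private lemma foldl_mono {ι : Type*} (e : ι → ℝ → ℝ) (hmono : ∀ i, Monotone (e i)) :
    ∀ (L : List ι), Monotone (fun t => L.foldl (fun t i => e i t) t)
  | [] => monotone_id
  | i :: L => fun a b hab => foldl_mono e hmono L (hmono i hab)

private lemma foldl_add {ι : Type*} (e : ι → ℝ → ℝ) (hmono : ∀ i, Monotone (e i))
    (hslack : ∀ i, Antitone fun s => e i s - s) (c : ℝ) (hc : 0 ≤ c) :
    ∀ (L : List ι) (t : ℝ),
      L.foldl (fun t i => e i t) (t + c) ≤ L.foldl (fun t i => e i t) t + c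
  | [], t => le_refl _
  | i :: L, t => by
    have h1 : e i (t + c) ≤ e i t + c := by
      have := hslack i (le_add_of_nonneg_right hc : t ≤ t + c)
      simp only at this; linarith
    calc L.foldl (fun t i => e i t) (e i (t + c))
        ≤ L.foldl (fun t i => e i t) (e i t + c) := foldl_mono e hmono L h1
      _ ≤ L.foldl (fun t i => e i t) (e i t) + c := foldl_add e hmono hslack c hc L _

/-- Theorem 2 and Corollary 2, abstract form: if user `m` has constant slack
`e_m s = s + c` with `c ≥ 0` (zero penalty at all times), then for any schedule
`L` (a permutation of all users) and any start time `t`, scheduling `m` first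
does not increase the completion time: `F(m :: L.erase m, t) ≤ F(L, t)`, where
`F(L, t) = L.foldl (fun t i => e i t) t`. In particular there is an optimal
minimum-length schedule in which user `m` is scheduled first. -/
theorem zero_penalty_user_first {ι : Type*} [Fintype ι] [DecidableEq ι]
    (e : ι → ℝ → ℝ)
    (hmono : ∀ i, Monotone (e i)) (hge : ∀ i s, s ≤ e i s)
    (hslack : ∀ i, Antitone fun s => e i s - s)
    (m : ι) (c : ℝ) (hc : 0 ≤ c) (hm : ∀ s, e m s = s + c) :
    ∀ (L : List ι), L.Nodup → (∀ i : ι, i ∈ L) →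
      ∀ t : ℝ,
        (m :: L.erase m).foldl (fun t i => e i t) t ≤
          L.foldl (fun t i => e i t) t := by
  intro L _ hall t
  obtain ⟨A, B, _, hL, herase⟩ := List.exists_erase_eq (hall m)
  subst hL
  rw [herase]
  simp only [List.foldl_cons, List.foldl_append, hm]
  calc B.foldl (fun t i => e i t) (A.foldl (fun t i => e i t) (t + c))
      ≤ B.foldl (fun t i => e i t) (A.foldl (fun t i => e i t) t + c) :=
        foldl_mono e hmono B (foldl_add e hmono hslack c hc A t)
    _ = _ := rfl
end

section
/- (Theorem 1, single-user case: optimal power control and time allocation.) Let W > 0, k > 0, D > 0, B > 0, C > 0 and Pmax > 0. Let P* > 0 be the unique positive solution of (P − C)·D/(W·logb 2 (1 + k·P)) = B, set P = min(Pmax, P*) and τ* = D/(W·logb 2 (1 + k·P)). Then τ* is the least element of the set {τ > 0 : ∃ α ≥ 0, W·τ·logb 2 (1 + k·α/τ) ≥ D and α ≤ τ·Pmax and α ≤ B + C·τ}; i.e., τ* is feasible (with energy consumption α* = P·τ*) and every feasible transmission time τ satisfies τ ≥ τ*. -/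
open Filter Real Topology

private lemma su_f_contOn (k C D W : ℝ) (hk : 0 < k) (hW : 0 < W) :
    ContinuousOn (fun P => (P - C) * (D / (W * Real.logb 2 (1 + k * P))))
      {P : ℝ | 0 < P} := by
  have hlog : ContinuousOn (fun P : ℝ => Real.log (1 + k * P)) {P : ℝ | 0 < P} := by
    apply Real.continuousOn_log.comp
      ((continuous_const.add (continuous_const.mul continuous_id)).continuousOn)
    intro P hP
    simp only [Set.mem_setOf_eq] at hP
    simp only [Set.mem_compl_iff, Set.mem_singleton_iff, id, Pi.add_apply, Pi.mul_apply]
    nlinarith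
  have hlb : ContinuousOn (fun P : ℝ => Real.logb 2 (1 + k * P)) {P : ℝ | 0 < P} := by
    simp only [Real.logb]
    exact hlog.div_const _
  apply ContinuousOn.mul ((continuous_id.sub continuous_const).continuousOn)
  apply ContinuousOn.div continuousOn_const (continuousOn_const.mul hlb)
  intro P hP
  simp only [Set.mem_setOf_eq] at hP
  have h0 : 0 < Real.logb 2 (1 + k * P) := Real.logb_pos one_lt_two (by nlinarith)
  exact (mul_pos hW h0).ne'

private lemma su_f_tendsto (k C D W : ℝ) (hk : 0 < k) (hW : 0 < W) (hD : 0 < D) :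
    Tendsto (fun P => (P - C) * (D / (W * Real.logb 2 (1 + k * P)))) atTop atTop := by
  have h1 : Tendsto (fun P : ℝ => 1 + k * P) atTop atTop :=
    tendsto_atTop_add_const_left _ 1 (tendsto_id.const_mul_atTop hk)
  have hlo : Tendsto (fun x : ℝ => Real.log x / x) atTop (𝓝 0) := by
    simpa using Real.isLittleO_log_id_atTop.tendsto_div_nhds_zero
  have hlo' : Tendsto (fun x : ℝ => Real.log x / x) atTop (𝓝[>] 0) := by
    apply tendsto_nhdsWithin_of_tendsto_nhds_of_eventually_within _ hlo
    filter_upwards [eventually_gt_atTop (2 : ℝ)] with x hx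
    exact div_pos (Real.log_pos (by linarith)) (by linarith)
  have hu : Tendsto (fun x : ℝ => x / Real.log x) atTop atTop := by
    have := hlo'.inv_tendsto_nhdsGT_zero
    refine this.congr fun x => ?_
    simp [inv_div]
  have h2 : Tendsto (fun P : ℝ => (1 + k * P) / Real.log (1 + k * P)) atTop atTop :=
    hu.comp h1
  have h3 : Tendsto (fun P : ℝ => (P - C) / (1 + k * P)) atTop (𝓝 (1 / k)) := by
    have hnum : Tendsto (fun P : ℝ => 1 - C / P) atTop (𝓝 1) := by
      simpa using tendsto_const_nhds.sub
        ((tendsto_const_nhds : Tendsto (fun _ : ℝ => C) atTop (𝓝 C)).div_atTop tendsto_id)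
    have hden : Tendsto (fun P : ℝ => 1 / P + k) atTop (𝓝 k) := by
      simpa using ((tendsto_const_nhds : Tendsto (fun _ : ℝ => (1:ℝ)) atTop (𝓝 1)).div_atTop
        tendsto_id).add (tendsto_const_nhds : Tendsto (fun _ : ℝ => k) atTop (𝓝 k))
    have h := hnum.div hden hk.ne'
    refine Tendsto.congr' ?_ (by simpa using h)
    filter_upwards [eventually_gt_atTop (0 : ℝ)] with P hP
    have hkP : (1 + k * P) ≠ 0 := by nlinarith
    simp only [Pi.div_apply]
    field_simp
  have h4 : Tendsto (fun P : ℝ => (P - C) / Real.log (1 + k * P)) atTop atTop := by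
    have h := h3.pos_mul_atTop (by positivity) h2
    refine Tendsto.congr' ?_ h
    filter_upwards [eventually_gt_atTop (0 : ℝ)] with P hP
    have hkP : (1 + k * P) ≠ 0 := by nlinarith
    rcases eq_or_ne (Real.log (1 + k * P)) 0 with h0 | h0
    · simp [h0]
    · field_simp
  have hc : (0 : ℝ) < D * Real.log 2 / W :=
    div_pos (mul_pos hD (Real.log_pos one_lt_two)) hW
  have h5 := h4.const_mul_atTop hc
  refine h5.congr fun P => ?_
  rw [Real.logb]
  rcases eq_or_ne (Real.log (1 + k * P)) 0 with h | h
  · simp [h]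
  · have hl2 : Real.log 2 ≠ 0 := (Real.log_pos one_lt_two).ne'
    field_simp



/-- Theorem 1, single-user case (optimal power control and time allocation): with
`P*` the unique positive solution of `(P − C)·D/(W·logb 2 (1 + k·P)) = B`, the
transmission time `τ* = D/(W·logb 2 (1 + k·min(Pmax, P*)))` is the least element
of the set of feasible transmission times of the single-user power control and
time allocation problem. -/
theorem single_user_optimal_time (W k D B C Pmax Pstar : ℝ)
    (hW : 0 < W) (hk : 0 < k) (hD : 0 < D) (hB : 0 < B) (hC : 0 < C)
    (hPmax : 0 < Pmax) (hPstar : 0 < Pstar)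
    (hsol : (Pstar - C) * (D / (W * Real.logb 2 (1 + k * Pstar))) = B)
    (huniq : ∀ P : ℝ, 0 < P →
      (P - C) * (D / (W * Real.logb 2 (1 + k * P))) = B → P = Pstar) :
    IsLeast {τ : ℝ | 0 < τ ∧ ∃ α : ℝ, 0 ≤ α ∧
        D ≤ W * τ * Real.logb 2 (1 + k * α / τ) ∧
        α ≤ τ * Pmax ∧ α ≤ B + C * τ}
      (D / (W * Real.logb 2 (1 + k * min Pmax Pstar))) := by
  --
  have hlpos : ∀ P : ℝ, 0 < P → 0 < Real.logb 2 (1 + k * P) := fun P hP =>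
    Real.logb_pos one_lt_two (by nlinarith)
  have hfneg : ∀ P : ℝ, 0 < P → P < C →
      (P - C) * (D / (W * Real.logb 2 (1 + k * P))) < 0 := by
    intro P hP hPC
    have h1 := hlpos P hP
    have h2 : 0 < D / (W * Real.logb 2 (1 + k * P)) := div_pos hD (by positivity)
    exact mul_neg_of_neg_of_pos (by linarith) h2
  -- Pstar > C
  have hPC : C < Pstar := by
    by_contra h
    push_neg at h
    have h1 := hlpos Pstar hPstar
    have h2 : 0 < D / (W * Real.logb 2 (1 + k * Pstar)) := div_pos hD (by positivity)
    nlinarith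
  -- below Pstar, f < B
  have hA : ∀ P : ℝ, 0 < P → P < Pstar →
      (P - C) * (D / (W * Real.logb 2 (1 + k * P))) < B := by
    intro P hP hPlt
    rcases lt_trichotomy ((P - C) * (D / (W * Real.logb 2 (1 + k * P)))) B with h | h | h
    · exact h
    · exact absurd (huniq P hP h) (by linarith)
    · exfalso
      set a := min P C / 2 with ha
      have ha0 : 0 < a := by positivity
      have haP : a < P := by
        have : min P C ≤ P := min_le_left _ _
        rw [ha]; linarith
      have haC : a < C := by
        have : min P C ≤ C := min_le_right _ _
        rw [ha]; linarith
      have hfa := hfneg a ha0 haC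
      have hsub : Set.Icc a P ⊆ {P : ℝ | 0 < P} := fun x hx => lt_of_lt_of_le ha0 hx.1
      obtain ⟨r, hr, hfr⟩ := intermediate_value_Icc haP.le
        ((su_f_contOn k C D W hk hW).mono hsub) ⟨by linarith, h.le⟩
      have := huniq r (lt_of_lt_of_le ha0 hr.1) hfr
      linarith [hr.2]
  -- above Pstar, f > B
  have hBgt : ∀ Q : ℝ, Pstar < Q →
      B < (Q - C) * (D / (W * Real.logb 2 (1 + k * Q))) := by
    intro Q hQ
    rcases lt_trichotomy B ((Q - C) * (D / (W * Real.logb 2 (1 + k * Q)))) with h | h | h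
    · exact h
    · exact absurd (huniq Q (hPstar.trans hQ) h.symm) (by linarith)
    · exfalso
      obtain ⟨R, hR2, hR1⟩ :=
        (((su_f_tendsto k C D W hk hW hD).eventually_gt_atTop B).and
          (eventually_ge_atTop Q)).exists
      have hsub : Set.Icc Q R ⊆ {P : ℝ | 0 < P} := fun x hx =>
        lt_of_lt_of_le (hPstar.trans hQ) hx.1
      obtain ⟨r, hr, hfr⟩ := intermediate_value_Icc hR1
        ((su_f_contOn k C D W hk hW).mono hsub) ⟨h.le, hR2.le⟩
      have := huniq r (lt_of_lt_of_le (hPstar.trans hQ) hr.1) hfr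
      linarith [hr.1]
  set p := min Pmax Pstar with hpdef
  have hp0 : 0 < p := lt_min hPmax hPstar
  have hlp : 0 < Real.logb 2 (1 + k * p) := hlpos p hp0
  set τ := D / (W * Real.logb 2 (1 + k * p)) with hτdef
  have hτ0 : 0 < τ := div_pos hD (by positivity)
  constructor
  · refine ⟨hτ0, p * τ, by positivity, ?_, ?_, ?_⟩
    · have heq : k * (p * τ) / τ = k * p := by
        field_simp
      rw [heq, hτdef]
      have heq2 : W * (D / (W * Real.logb 2 (1 + k * p))) * Real.logb 2 (1 + k * p) = D := by
        field_simp
      linarith [heq2.ge]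
    · have hple : p ≤ Pmax := min_le_left _ _
      nlinarith
    · have hfp : (p - C) * (D / (W * Real.logb 2 (1 + k * p))) ≤ B := by
        rcases le_or_gt Pstar Pmax with h | h
        · have hpe : p = Pstar := min_eq_right h
          rw [hpe]
          exact hsol.le
        · have hpe : p = Pmax := min_eq_left h.le
          exact (hA p hp0 (by rw [hpe]; exact h)).le
      rw [← hτdef] at hfp
      nlinarith
  · rintro τ' ⟨hτ'0, α, hα0, hdata, hαP, hαE⟩
    by_contra hlt
    push_neg at hlt
    set Q := α / τ' with hQdef
    have hQτ : Q * τ' = α := div_mul_cancel₀ α hτ'0.ne'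
    have hQexpr : k * α / τ' = k * Q := by rw [hQdef, mul_div_assoc]
    rw [hQexpr] at hdata
    have hl1 : Real.logb 2 (1 + k * p) < Real.logb 2 (1 + k * Q) := by
      have h1 : D / (W * τ') ≤ Real.logb 2 (1 + k * Q) := by
        rw [div_le_iff₀ (by positivity)]
        nlinarith
      have h2 : Real.logb 2 (1 + k * p) < D / (W * τ') := by
        rw [lt_div_iff₀ (by positivity)]
        have h3 := (lt_div_iff₀ (by positivity : (0:ℝ) < W * Real.logb 2 (1 + k * p))).mp hlt
        nlinarith
      linarith
    have hQp : p < Q := by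
      by_contra h
      push_neg at h
      have : Real.logb 2 (1 + k * Q) ≤ Real.logb 2 (1 + k * p) := by
        apply Real.logb_le_logb_of_le one_lt_two
        · nlinarith
        · nlinarith
      linarith
    have hQPmax : Q ≤ Pmax := by
      rw [hQdef, div_le_iff₀ hτ'0]
      nlinarith
    have hpe : p = Pstar := by
      rcases le_or_gt Pmax Pstar with h | h
      · exfalso
        have : p = Pmax := min_eq_left h
        rw [this] at hQp
        linarith
      · exact min_eq_right h.le
    have hQstar : Pstar < Q := hpe ▸ hQp
    have hfQ := hBgt Q hQstar
    have hlQ : 0 < Real.logb 2 (1 + k * Q) := hlpos Q (hPstar.trans hQstar)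
    have hτ'ge : D / (W * Real.logb 2 (1 + k * Q)) ≤ τ' := by
      rw [div_le_iff₀ (by positivity)]
      nlinarith
    have hQC : 0 < Q - C := by linarith
    have hchain : (Q - C) * (D / (W * Real.logb 2 (1 + k * Q))) ≤ (Q - C) * τ' :=
      mul_le_mul_of_nonneg_left hτ'ge hQC.le
    have hsm : (Q - C) * τ' = Q * τ' - C * τ' := sub_mul Q C τ'
    linarith
end
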